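/- Let k, ℓ ≥ 0, let π1 ∈ T_k and π2 ∈ T_ℓ (with the convention T_0 = {ε}). Then slmax(C1(π1, π2)) = slmax(π1) + slmax(π2) + 1. -/

import Mathlib

namespace TSP

theorem foldr_max_mem {α : Type} [LinearOrder α] (x : α) (l : List α) :
    l.foldr max x ∈ x :: l := by
  induction l with
  | nil => simp
  | cons a t ih =>
    simp only [List.foldr_cons]
    rcases max_choice a (t.foldr max x) with h | h <;> rw [h]
    · simp
    · rcases List.mem_cons.mp ih with h' | h'
      · rw [h']; simp
      · exact List.mem_cons.mpr (Or.inr (List.mem_cons.mpr (Or.inr h')))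

theorem length_takeWhile_lt {α : Type} [DecidableEq α] {m : α} {l : List α}
    (h : m ∈ l) : (l.takeWhile (· ≠ m)).length < l.length := by
  have hd : l.dropWhile (· ≠ m) ≠ [] := by
    intro hnil
    have := List.dropWhile_eq_nil_iff.mp hnil m h
    simp at this
  have hsum : (l.takeWhile (· ≠ m)).length + (l.dropWhile (· ≠ m)).length = l.length := by
    rw [← List.length_append, List.takeWhile_append_dropWhile]
  have : 0 < (l.dropWhile (· ≠ m)).length := List.length_pos_iff.mpr hd
  omega

theorem length_tail_dropWhile_lt {α : Type} [DecidableEq α] {m : α} {l : List α}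
    (h : l ≠ []) : ((l.dropWhile (· ≠ m)).tail).length < l.length := by
  have hsum : (l.takeWhile (· ≠ m)).length + (l.dropWhile (· ≠ m)).length = l.length := by
    rw [← List.length_append, List.takeWhile_append_dropWhile]
  have h2 : ((l.dropWhile (· ≠ m)).tail).length = (l.dropWhile (· ≠ m)).length - 1 :=
    List.length_tail
  have : 0 < l.length := List.length_pos_iff.mpr h
  omega

/-- The stack-sorting operator `S`: `S(ε) = ε`, and if `A` is nonempty with
largest element `m` and `A = A_L · (m) · A_R`, then `S(A) = S(A_L) · S(A_R) · (m)`. -/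
def S {α : Type} [LinearOrder α] : List α → List α
  | [] => []
  | x :: l =>
    let m := l.foldr max x
    S ((x :: l).takeWhile (· ≠ m)) ++ S (((x :: l).dropWhile (· ≠ m)).tail) ++ [m]
termination_by l => l.length
decreasing_by
  · first
    | exact length_takeWhile_lt (foldr_max_mem x l)
    | (rw [List.foldr_attach]; exact length_takeWhile_lt (foldr_max_mem x l))
    | (simp only [List.foldr_attach]; exact length_takeWhile_lt (foldr_max_mem x l))
  · exact length_tail_dropWhile_lt (by simp)

/-- The identity permutation `id_n = (1, 2, …, n)` as a list. -/
def idPerm (n : ℕ) : List ℕ := List.range' 1 n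

/-- `l` is a permutation of `{1, …, n}` (viewed as a sequence). -/
def IsPermOf (n : ℕ) (l : List ℕ) : Prop := l.Perm (idPerm n)

/-- `l` is a two-stack sortable permutation (of `{1, …, len l}`). -/
def Is2SS (l : List ℕ) : Prop := IsPermOf l.length l ∧ S (S l) = idPerm l.length

/-- `σ^{+k}`: add `k` to every entry. -/
def shift (k : ℕ) (l : List ℕ) : List ℕ := l.map (· + k)

/-- `σ^{+(k1,m,k2)}`: add `k1` to every entry strictly smaller than `m`, `k2` to the others. -/
def shift3 (k1 m k2 : ℕ) (l : List ℕ) : List ℕ :=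
  l.map (fun a => if a < m then a + k1 else a + k2)

/-- Standardization `P(A)`: the permutation of `{1,…,len A}` in the same relative order. -/
def stand (l : List ℕ) : List ℕ := l.map (fun a => (l.filter (fun b => b ≤ a)).length)

/-- Avoidance of the pattern 231: no positions `i < j < k` with `l(k) < l(i) < l(j)`. -/
def Avoids231 (l : List ℕ) : Prop :=
  ¬ ∃ i j k, i < j ∧ j < k ∧ k < l.length ∧
      l.getD k 0 < l.getD i 0 ∧ l.getD i 0 < l.getD j 0

/-- The list of values of the left-to-right maxima of `l`, in order. -/
def lrMaxima (l : List ℕ) : List ℕ :=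
  ((List.range l.length).filter
    (fun i => (l.take i).all (fun b => b < l.getD i 0))).map (fun i => l.getD i 0)

/-- `lmax`: the number of left-to-right maxima. -/
def lmax (l : List ℕ) : ℕ :=
  (List.range l.length).countP (fun i => (l.take i).all (fun b => b < l.getD i 0))

/-- `rmax`: the number of right-to-left maxima. -/
def rmax (l : List ℕ) : ℕ :=
  (List.range l.length).countP (fun i => (l.drop (i+1)).all (fun b => b < l.getD i 0))

/-- `asc`: the number of ascents. -/
def asc (l : List ℕ) : ℕ :=
  (List.range (l.length - 1)).countP (fun i => l.getD i 0 < l.getD (i+1) 0)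

/-- `des`: the number of descents. -/
def des (l : List ℕ) : ℕ :=
  (List.range (l.length - 1)).countP (fun i => l.getD (i+1) 0 < l.getD i 0)

/-- `slmax(π)`: the number of left-to-right maxima of `S(π)`. -/
def slmax (l : List ℕ) : ℕ := lmax (S l)

/-- `sldes(π)`: the number of entries `a` that precede `a - 1` in `S(π)`. -/
def sldes (l : List ℕ) : ℕ :=
  (List.range (S l).length).countP
    (fun i => ((S l).drop (i+1)).any (fun b => b + 1 = (S l).getD i 0))

/-- The construction `C1(π1, π2) = π1 · (k+ℓ+1) · π2^{+k}`. -/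
def C1 (p1 p2 : List ℕ) : List ℕ :=
  p1 ++ (p1.length + p2.length + 1) :: shift p1.length p2

/-- The `i`-th left-to-right maximum `a_i` of `S(π2)` (1-indexed). -/
def lrm (p2 : List ℕ) (i : ℕ) : ℕ := (lrMaxima (S p2)).getD (i - 1) 0

/-- The construction `C2(π1, π2, i) = π1^{+(0,k,a_i)} · (k+ℓ+1) · π2^{+(k-1,a_i+1,k)}`. -/
def C2 (p1 p2 : List ℕ) (i : ℕ) : List ℕ :=
  shift3 0 p1.length (lrm p2 i) p1 ++
    (p1.length + p2.length + 1) :: shift3 (p1.length - 1) (lrm p2 i + 1) p1.length p2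

/-- The decomposition `D(π) = (P(π_ℓ), P(π_r))`, where `π = π_ℓ · (n) · π_r`
with `n` the largest entry of `π`. -/
def D (l : List ℕ) : List ℕ × List ℕ :=
  match l with
  | [] => ([], [])
  | x :: t =>
    let m := t.foldr max x
    (stand ((x :: t).takeWhile (· ≠ m)), stand (((x :: t).dropWhile (· ≠ m)).tail))

theorem le_foldr_max {α : Type} [LinearOrder α] (x : α) (l : List α) :
    ∀ y ∈ x :: l, y ≤ l.foldr max x := by
  induction l generalizing x with
  | nil => intro y hy; simp at hy; simp [hy]
  | cons a t ih =>
    intro y hy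
    simp only [List.foldr_cons]
    rcases List.mem_cons.mp hy with h | h
    · subst h; exact le_trans (ih y y (by simp)) (le_max_right _ _)
    · rcases List.mem_cons.mp h with h' | h'
      · subst h'; exact le_max_left _ _
      · exact le_trans (ih x y (List.mem_cons.mpr (Or.inr h'))) (le_max_right _ _)

theorem foldr_max_eq {α : Type} [LinearOrder α] {x M : α} {l : List α}
    (hM : M ∈ x :: l) (hle : ∀ y ∈ x :: l, y ≤ M) : l.foldr max x = M :=
  le_antisymm (hle _ (foldr_max_mem x l)) (le_foldr_max x l M hM)

theorem S_cons {α : Type} [LinearOrder α] (x : α) (l : List α) :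
    S (x :: l) = S ((x :: l).takeWhile (· ≠ l.foldr max x)) ++
      S (((x :: l).dropWhile (· ≠ l.foldr max x)).tail) ++ [l.foldr max x] := by
  rw [S]

theorem takeWhile_ne_append {A B : List ℕ} {M : ℕ} (hA : ∀ a ∈ A, a ≠ M) :
    (A ++ M :: B).takeWhile (· ≠ M) = A := by
  induction A with
  | nil => rw [List.nil_append, List.takeWhile_cons_of_neg (by simp)]
  | cons a t ih =>
    have ha : a ≠ M := hA a (by simp)
    rw [List.cons_append, List.takeWhile_cons_of_pos (by simp [ha]),
      ih (fun b hb => hA b (by simp [hb]))]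

theorem dropWhile_ne_append {A B : List ℕ} {M : ℕ} (hA : ∀ a ∈ A, a ≠ M) :
    (A ++ M :: B).dropWhile (· ≠ M) = M :: B := by
  induction A with
  | nil => rw [List.nil_append, List.dropWhile_cons_of_neg (by simp)]
  | cons a t ih =>
    have ha : a ≠ M := hA a (by simp)
    rw [List.cons_append, List.dropWhile_cons_of_pos (by simp [ha]),
      ih (fun b hb => hA b (by simp [hb]))]

theorem dropWhile_ne_eq_cons {m : ℕ} {L : List ℕ} (h : m ∈ L) :
    L.dropWhile (· ≠ m) = m :: (L.dropWhile (· ≠ m)).tail := by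
  induction L with
  | nil => simp at h
  | cons a t ih =>
    by_cases ha : a = m
    · subst ha; rw [List.dropWhile_cons_of_neg (by simp)]; rfl
    · rw [List.dropWhile_cons_of_pos (by simp [ha])]
      exact ih (by rcases List.mem_cons.mp h with h' | h'; exact absurd h'.symm ha; exact h')

theorem S_split (A B : List ℕ) (M : ℕ) (hA : ∀ a ∈ A, a < M) (hB : ∀ b ∈ B, b < M) :
    S (A ++ M :: B) = S A ++ S B ++ [M] := by
  have hA' : ∀ a ∈ A, a ≠ M := fun a ha => ne_of_lt (hA a ha)
  have hmem : M ∈ A ++ M :: B := by simp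
  have hle : ∀ y ∈ A ++ M :: B, y ≤ M := by
    intro y hy
    rcases List.mem_append.mp hy with h | h
    · exact le_of_lt (hA y h)
    · rcases List.mem_cons.mp h with h' | h'
      · exact le_of_eq h'
      · exact le_of_lt (hB y h')
  match hAB : A ++ M :: B with
  | [] => simp at hAB
  | x :: t =>
    rw [hAB] at hmem hle
    have hfold : t.foldr max x = M := foldr_max_eq hmem hle
    rw [S_cons, hfold, ← hAB, takeWhile_ne_append hA', dropWhile_ne_append hA', List.tail_cons]

theorem foldr_max_map_add (k x : ℕ) (l : List ℕ) :
    (l.map (· + k)).foldr max (x + k) = l.foldr max x + k := by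
  induction l with
  | nil => simp
  | cons a t ih =>
    simp only [List.map_cons, List.foldr_cons, ih]
    rcases max_choice a (t.foldr max x) with h | h <;>
      rcases max_choice (a + k) (t.foldr max x + k) with h' | h' <;>
      rw [h, h'] <;> omega

theorem S_map_add (k : ℕ) (l : List ℕ) : S (l.map (· + k)) = (S l).map (· + k) := by
  generalize hn : l.length = n
  induction n using Nat.strong_induction_on generalizing l with
  | _ n ih =>
    match l with
    | [] => simp [S]
    | x :: t =>
      have hm : t.foldr max x ∈ x :: t := foldr_max_mem x t
      set m := t.foldr max x with hmdef
      have hpred : (fun a => decide (a ≠ m + k)) ∘ (· + k) = fun a => decide (a ≠ m) := by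
        funext a; simp
      have hc : (x + k) :: List.map (fun y => y + k) t = List.map (fun y => y + k) (x :: t) := rfl
      rw [List.map_cons, S_cons, foldr_max_map_add, ← hmdef, hc,
        List.takeWhile_map, List.dropWhile_map, hpred, ← List.map_tail,
        S_cons, ← hmdef]
      have h1 : S (((x :: t).takeWhile (· ≠ m)).map (· + k)) =
          (S ((x :: t).takeWhile (· ≠ m))).map (· + k) :=
        ih _ (by rw [← hn]; exact length_takeWhile_lt hm) _ rfl
      have h2 : S ((((x :: t).dropWhile (· ≠ m)).tail).map (· + k)) =
          (S (((x :: t).dropWhile (· ≠ m)).tail)).map (· + k) :=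
        ih _ (by rw [← hn]; exact length_tail_dropWhile_lt (by simp)) _ rfl
      rw [h1, h2]
      simp

theorem S_perm (l : List ℕ) : (S l).Perm l := by
  generalize hn : l.length = n
  induction n using Nat.strong_induction_on generalizing l with
  | _ n ih =>
    match l with
    | [] => simp [S]
    | x :: t =>
      have hm : t.foldr max x ∈ x :: t := foldr_max_mem x t
      set m := t.foldr max x with hmdef
      set A := (x :: t).takeWhile (· ≠ m) with hAdef
      set B := ((x :: t).dropWhile (· ≠ m)).tail with hBdef
      have hsplit : x :: t = A ++ m :: B := by
        conv_lhs => rw [← List.takeWhile_append_dropWhile (p := (· ≠ m)) (l := x :: t)]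
        rw [dropWhile_ne_eq_cons hm]
      have hpA : (S A).Perm A := ih _ (by rw [← hn]; exact length_takeWhile_lt hm) _ rfl
      have hpB : (S B).Perm B := ih _ (by rw [← hn]; exact length_tail_dropWhile_lt (by simp)) _ rfl
      rw [S_cons, ← hmdef, ← hAdef, ← hBdef]
      conv_rhs => rw [hsplit]
      have h2 : (B ++ [m]).Perm (m :: B) := by
        simpa using (List.perm_middle (a := m) (l₁ := B) (l₂ := []))
      exact ((hpA.append hpB).append (List.Perm.refl [m])).trans
        (by rw [List.append_assoc]; exact (List.Perm.append_left A h2))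

theorem lmax_append (A B : List ℕ) (h : ∀ a ∈ A, ∀ b ∈ B, a < b) :
    lmax (A ++ B) = lmax A + lmax B := by
  unfold lmax
  rw [List.length_append, List.range_add, List.countP_append, List.countP_map]
  congr 1
  · apply List.countP_congr
    intro i hi
    have hi' : i < A.length := List.mem_range.mp hi
    rw [List.take_append_of_le_length (le_of_lt hi'), List.getD_append _ _ _ _ hi']
  · apply List.countP_congr
    intro j hj
    have hj' : j < B.length := List.mem_range.mp hj
    simp only [Function.comp_apply]
    rw [List.take_append, List.take_of_length_le (by omega),
      Nat.add_sub_cancel_left, List.getD_append_right _ _ _ _ (by omega),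
      Nat.add_sub_cancel_left, List.all_append]
    have hmem : B.getD j 0 ∈ B := by
      rw [List.getD_eq_getElem _ _ hj']; exact List.getElem_mem _
    have hAall : A.all (fun b => b < B.getD j 0) = true := by
      rw [List.all_eq_true]; intro a ha
      simp only [decide_eq_true_eq]
      exact h a ha _ hmem
    rw [hAall, Bool.true_and]

theorem lmax_map_add (k : ℕ) (l : List ℕ) : lmax (l.map (· + k)) = lmax l := by
  unfold lmax
  rw [List.length_map]
  apply List.countP_congr
  intro i hi
  have hi' : i < l.length := List.mem_range.mp hi
  have hg : (l.map (· + k)).getD i 0 = l.getD i 0 + k := by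
    rw [List.getD_eq_getElem _ _ (by simpa using hi'), List.getD_eq_getElem _ _ hi',
      List.getElem_map]
  rw [← List.map_take, hg, List.all_map]
  simp [Function.comp, Nat.add_lt_add_iff_right]

theorem lmax_singleton (m : ℕ) : lmax [m] = 1 := rfl

/-- For `k, ℓ ≥ 0`, `π1 ∈ T_k` and `π2 ∈ T_ℓ` (with `T_0 = {ε}`),
`slmax(C1(π1, π2)) = slmax(π1) + slmax(π2) + 1`. -/
theorem slmax_C1 (k ℓ : ℕ) (π1 π2 : List ℕ)
    (h1 : π1.length = k) (h1' : Is2SS π1) (h2 : π2.length = ℓ) (h2' : Is2SS π2) :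
    slmax (C1 π1 π2) = slmax π1 + slmax π2 + 1 := by
  subst h1 h2
  have hp1 : ∀ a ∈ π1, 1 ≤ a ∧ a ≤ π1.length := by
    intro a ha
    have := List.mem_range'_1.mp (h1'.1.mem_iff.mp ha)
    omega
  have hp2 : ∀ a ∈ π2, 1 ≤ a ∧ a ≤ π2.length := by
    intro a ha
    have := List.mem_range'_1.mp (h2'.1.mem_iff.mp ha)
    omega
  set M := π1.length + π2.length + 1 with hM
  have hA : ∀ a ∈ π1, a < M := fun a ha => by have := hp1 a ha; omega
  have hB : ∀ b ∈ shift π1.length π2, b < M := by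
    intro b hb
    rcases List.mem_map.mp hb with ⟨e, he, rfl⟩
    have := hp2 e he; omega
  have hC1 : C1 π1 π2 = π1 ++ M :: shift π1.length π2 := rfl
  rw [slmax, hC1, S_split _ _ _ hA hB, shift, S_map_add]
  have hmid : ∀ a ∈ S π1, ∀ b ∈ (S π2).map (· + π1.length), a < b := by
    intro a ha b hb
    have ha' := hp1 a ((S_perm π1).subset ha)
    rcases List.mem_map.mp hb with ⟨e, he, rfl⟩
    have := hp2 e ((S_perm π2).subset he)
    omega
  have hbig : ∀ a ∈ S π1 ++ (S π2).map (· + π1.length), ∀ b ∈ [M], a < b := by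
    intro a ha b hb
    have hb' : b = M := by simpa using hb
    subst hb'
    rcases List.mem_append.mp ha with h | h
    · have := hp1 a ((S_perm π1).subset h); omega
    · rcases List.mem_map.mp h with ⟨e, he, rfl⟩
      have := hp2 e ((S_perm π2).subset he); omega
  rw [lmax_append _ [M] hbig, lmax_append _ _ hmid, lmax_singleton, lmax_map_add]
  rfl

end TSP
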